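/- Let A₁, A₂, A₃ be 3×3 normal 0-1 matrices with A₁ + A₂ + A₃ = J₃, each having exactly three nonzero entries, and suppose not all of A₁, A₂, A₃ are symmetric. Then there is a permutation matrix Q such that {A₁, A₂, A₃} = {I₃, QᵀPQ, QᵀPᵀQ}, where P = [[0,1,0],[0,0,1],[1,0,0]]. -/

import Mathlib

open Matrix
set_option maxRecDepth 2000000

namespace Stmt16Aux

def b2m (f : Fin 3 → Fin 3 → Bool) : Matrix (Fin 3) (Fin 3) ℝ :=
  Matrix.of fun i j => if f i j then 1 else 0

def eB : Fin 3 → Fin 3 → Bool := ![![true,false,false],![false,true,false],![false,false,true]]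
def cB : Fin 3 → Fin 3 → Bool := ![![false,true,false],![false,false,true],![true,false,false]]
def cB' : Fin 3 → Fin 3 → Bool := ![![false,false,true],![true,false,false],![false,true,false]]

def L : List (Fin 3 → Fin 3 → Bool) :=
  [ ![![false,false,false],![false,false,true],![false,true,true]],
    ![![false,false,false],![false,true,true],![false,true,false]],
    ![![false,false,true],![false,false,false],![true,false,true]],
    ![![false,false,true],![false,true,false],![true,false,false]],
    cB',
    cB,
    ![![false,true,false],![true,false,false],![false,false,true]],
    ![![false,true,false],![true,true,false],![false,false,false]],
    ![![true,false,false],![false,false,true],![false,true,false]],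
    eB,
    ![![true,false,true],![false,false,false],![true,false,false]],
    ![![true,true,false],![true,false,false],![false,false,false]] ]

abbrev nrm (f : Fin 3 → Fin 3 → Bool) : Prop :=
  ∀ i j : Fin 3, (∑ k, ((f i k && f j k).toNat)) = ∑ k, ((f k i && f k j).toNat)

abbrev cnt (f : Fin 3 → Fin 3 → Bool) : ℕ :=
  (Finset.univ.filter fun p : Fin 3 × Fin 3 => f p.1 p.2 = true).card

abbrev symB (f : Fin 3 → Fin 3 → Bool) : Prop := ∀ i j, f i j = f j i

abbrev exo (f₁ f₂ f₃ : Fin 3 → Fin 3 → Bool) : Prop :=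
  ∀ i j, (f₁ i j).toNat + (f₂ i j).toNat + (f₃ i j).toNat = 1

instance instDecEqF : DecidableEq (Fin 3 → Fin 3 → Bool) := inferInstance
instance instMemL (f : Fin 3 → Fin 3 → Bool) : Decidable (f ∈ L) := inferInstance
instance instNrm (f : Fin 3 → Fin 3 → Bool) : Decidable (nrm f) := inferInstance
instance instSymB (f : Fin 3 → Fin 3 → Bool) : Decidable (symB f) := inferInstance
instance instExo (f₁ f₂ f₃ : Fin 3 → Fin 3 → Bool) : Decidable (exo f₁ f₂ f₃) := inferInstance

lemma eta (f : Fin 3 → Fin 3 → Bool) :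
    f = ![![f 0 0, f 0 1, f 0 2], ![f 1 0, f 1 1, f 1 2], ![f 2 0, f 2 1, f 2 2]] := by
  funext i j; fin_cases i <;> fin_cases j <;> rfl

lemma classify9 : ∀ a b c d e f g h i : Bool,
    cnt (![![a,b,c],![d,e,f],![g,h,i]]) = 3 →
    nrm (![![a,b,c],![d,e,f],![g,h,i]]) →
    (![![a,b,c],![d,e,f],![g,h,i]]) ∈ L := by decide

lemma classify (f : Fin 3 → Fin 3 → Bool) (h3 : cnt f = 3) (hn : nrm f) : f ∈ L := by
  rw [eta f] at h3 hn ⊢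
  exact classify9 _ _ _ _ _ _ _ _ _ h3 hn

def Pred (f₁ f₂ f₃ : Fin 3 → Fin 3 → Bool) : Prop :=
  exo f₁ f₂ f₃ → ¬(symB f₁ ∧ symB f₂ ∧ symB f₃) →
    ((f₁ = eB ∧ f₂ = cB ∧ f₃ = cB') ∨ (f₁ = eB ∧ f₂ = cB' ∧ f₃ = cB) ∨
     (f₁ = cB ∧ f₂ = eB ∧ f₃ = cB') ∨ (f₁ = cB ∧ f₂ = cB' ∧ f₃ = eB) ∨
     (f₁ = cB' ∧ f₂ = eB ∧ f₃ = cB) ∨ (f₁ = cB' ∧ f₂ = cB ∧ f₃ = eB))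

noncomputable instance instPred (f₁ f₂ f₃ : Fin 3 → Fin 3 → Bool) : Decidable (Pred f₁ f₂ f₃) := by
  unfold Pred; infer_instance

lemma combine' :
    (L.all fun f₁ => L.all fun f₂ => L.all fun f₃ => decide (Pred f₁ f₂ f₃)) = true := by decide

lemma combine {f₁ f₂ f₃ : Fin 3 → Fin 3 → Bool}
    (h₁ : f₁ ∈ L) (h₂ : f₂ ∈ L) (h₃ : f₃ ∈ L) : Pred f₁ f₂ f₃ := by
  have t1 := List.all_eq_true.mp combine' f₁ h₁
  have t2 := List.all_eq_true.mp t1 f₂ h₂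
  have t3 := List.all_eq_true.mp t2 f₃ h₃
  exact of_decide_eq_true t3

lemma rot3 {α : Type*} (a b c : α) : ({a,b,c} : Set α) = {c,a,b} := by
  ext x; simp only [Set.mem_insert_iff, Set.mem_singleton_iff]; tauto

lemma sw12 {α : Type*} (a b c : α) : ({a,b,c} : Set α) = {b,a,c} := Set.insert_comm a b {c}

lemma sw23 {α : Type*} (a b c : α) : ({a,b,c} : Set α) = {a,c,b} := by rw [Set.pair_comm]

lemma mul_entry (x y : Bool) :
    (if x then (1:ℝ) else 0) * (if y then 1 else 0) = ((x && y).toNat : ℝ) := by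
  cases x <;> cases y <;> simp

lemma nrm_iff (f : Fin 3 → Fin 3 → Bool) :
    b2m f * (b2m f)ᵀ = (b2m f)ᵀ * b2m f ↔ nrm f := by
  rw [← Matrix.ext_iff]
  unfold nrm
  apply forall₂_congr
  intro i j
  rw [Matrix.mul_apply, Matrix.mul_apply]
  simp only [Matrix.transpose_apply]
  have h1 : ∑ k, b2m f i k * b2m f j k = ((∑ k, (f i k && f j k).toNat : ℕ) : ℝ) := by
    push_cast
    exact Finset.sum_congr rfl fun k _ => mul_entry _ _
  have h2 : ∑ k, b2m f k i * b2m f k j = ((∑ k, (f k i && f k j).toNat : ℕ) : ℝ) := by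
    push_cast
    exact Finset.sum_congr rfl fun k _ => mul_entry _ _
  rw [h1, h2, Nat.cast_inj]

lemma cnt_eq (f : Fin 3 → Fin 3 → Bool) :
    (Finset.univ.filter fun p : Fin 3 × Fin 3 => b2m f p.1 p.2 = 1).card = cnt f := by
  unfold cnt
  congr 1
  apply Finset.filter_congr
  intro p _
  cases hb : f p.1 p.2 <;> simp [b2m, hb]

lemma sym_iff (f : Fin 3 → Fin 3 → Bool) : (b2m f)ᵀ = b2m f ↔ symB f := by
  rw [← Matrix.ext_iff]
  unfold symB
  apply forall₂_congr
  intro i j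
  simp only [Matrix.transpose_apply, b2m, Matrix.of_apply]
  cases hb : f j i <;> cases hb' : f i j <;> simp

lemma hE : b2m eB = 1 := by
  apply Matrix.ext; intro i j
  fin_cases i <;> fin_cases j <;>
    simp [b2m, eB, Matrix.one_apply, Matrix.vecHead, Matrix.vecTail]

lemma hC : b2m cB =
    (!![0, 1, 0; 0, 0, 1; 1, 0, 0] : Matrix (Fin 3) (Fin 3) ℝ).submatrix
      (Equiv.refl (Fin 3)) (Equiv.refl (Fin 3)) := by
  apply Matrix.ext; intro i j
  fin_cases i <;> fin_cases j <;>
    norm_num [b2m, cB, Matrix.submatrix_apply, Matrix.vecHead, Matrix.vecTail]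

lemma hC' : b2m cB' =
    (!![0, 1, 0; 0, 0, 1; 1, 0, 0] : Matrix (Fin 3) (Fin 3) ℝ)ᵀ.submatrix
      (Equiv.refl (Fin 3)) (Equiv.refl (Fin 3)) := by
  apply Matrix.ext; intro i j
  fin_cases i <;> fin_cases j <;>
    norm_num [b2m, cB', Matrix.submatrix_apply, Matrix.vecHead, Matrix.vecTail]

end Stmt16Aux

open Stmt16Aux in
theorem stmt16 (A₁ A₂ A₃ : Matrix (Fin 3) (Fin 3) ℝ)
    (h01 : ∀ B ∈ ({A₁, A₂, A₃} : Set (Matrix (Fin 3) (Fin 3) ℝ)), ∀ a b, B a b = 0 ∨ B a b = 1)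
    (hnorm : ∀ B ∈ ({A₁, A₂, A₃} : Set (Matrix (Fin 3) (Fin 3) ℝ)), B * Bᵀ = Bᵀ * B)
    (hsum : A₁ + A₂ + A₃ = fun _ _ => (1 : ℝ))
    (hthree : ∀ B ∈ ({A₁, A₂, A₃} : Set (Matrix (Fin 3) (Fin 3) ℝ)),
      (Finset.univ.filter fun p : Fin 3 × Fin 3 => B p.1 p.2 = 1).card = 3)
    (hnonsym : ¬(A₁ᵀ = A₁ ∧ A₂ᵀ = A₂ ∧ A₃ᵀ = A₃)) :
    ∃ σ : Equiv.Perm (Fin 3),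
      ({A₁, A₂, A₃} : Set (Matrix (Fin 3) (Fin 3) ℝ)) =
        {(1 : Matrix (Fin 3) (Fin 3) ℝ),
          (!![0, 1, 0; 0, 0, 1; 1, 0, 0] : Matrix (Fin 3) (Fin 3) ℝ).submatrix σ σ,
          (!![0, 1, 0; 0, 0, 1; 1, 0, 0] : Matrix (Fin 3) (Fin 3) ℝ)ᵀ.submatrix σ σ} := by
  classical
  have habs : ∀ A : Matrix (Fin 3) (Fin 3) ℝ, (∀ a b, A a b = 0 ∨ A a b = 1) →
      ∃ f : Fin 3 → Fin 3 → Bool, A = b2m f := by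
    intro A h
    refine ⟨fun i j => if A i j = 1 then true else false, ?_⟩
    ext i j
    rcases h i j with h0 | h1
    · simp [b2m, h0, show A i j ≠ 1 by rw [h0]; norm_num]
    · simp [b2m, h1]
  obtain ⟨f₁, e₁⟩ := habs A₁ (h01 A₁ (by simp))
  obtain ⟨f₂, e₂⟩ := habs A₂ (h01 A₂ (by simp))
  obtain ⟨f₃, e₃⟩ := habs A₃ (h01 A₃ (by simp))
  have m₁ := h01 A₁ (by simp); have m₂ := h01 A₂ (by simp); have m₃ := h01 A₃ (by simp)
  have hn₁ : nrm f₁ := (nrm_iff f₁).mp (e₁ ▸ hnorm A₁ (by simp))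
  have hn₂ : nrm f₂ := (nrm_iff f₂).mp (e₂ ▸ hnorm A₂ (by simp))
  have hn₃ : nrm f₃ := (nrm_iff f₃).mp (e₃ ▸ hnorm A₃ (by simp))
  have hc₁ : cnt f₁ = 3 := by rw [← cnt_eq]; rw [← e₁]; exact hthree A₁ (by simp)
  have hc₂ : cnt f₂ = 3 := by rw [← cnt_eq]; rw [← e₂]; exact hthree A₂ (by simp)
  have hc₃ : cnt f₃ = 3 := by rw [← cnt_eq]; rw [← e₃]; exact hthree A₃ (by simp)
  have hex : exo f₁ f₂ f₃ := by
    intro i j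
    have := congrFun (congrFun hsum i) j
    rw [e₁, e₂, e₃] at this
    simp only [Matrix.add_apply, b2m, Matrix.of_apply] at this
    cases h1 : f₁ i j <;> cases h2 : f₂ i j <;> cases h3 : f₃ i j <;>
      rw [h1, h2, h3] at this <;> norm_num at this <;> norm_num
  have hns : ¬(symB f₁ ∧ symB f₂ ∧ symB f₃) := by
    rw [← sym_iff, ← sym_iff, ← sym_iff, ← e₁, ← e₂, ← e₃]
    exact hnonsym
  have hd := combine (classify f₁ hc₁ hn₁) (classify f₂ hc₂ hn₂)
    (classify f₃ hc₃ hn₃) hex hns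
  refine ⟨Equiv.refl (Fin 3), ?_⟩
  rw [e₁, e₂, e₃]
  rcases hd with ⟨g1,g2,g3⟩|⟨g1,g2,g3⟩|⟨g1,g2,g3⟩|⟨g1,g2,g3⟩|⟨g1,g2,g3⟩|⟨g1,g2,g3⟩ <;>
    rw [g1, g2, g3, hE, hC, hC'] <;>
    first
      | rfl
      | exact sw23 _ _ _
      | exact sw12 _ _ _
      | exact rot3 _ _ _
      | exact (rot3 _ _ _).trans (rot3 _ _ _)
      | exact (sw12 _ _ _).trans (rot3 _ _ _)
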